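/- Let $p\in(1,\infty)$, $\varepsilon\in(0,\infty)$, $t\in[0,\infty)$, and let $x,\beta\colon[0,t]\to[0,\infty]$ be Borel measurable with $(x_s)^p\le(x_0)^p+p\int_0^s(x_r)^{p-1}\beta_r\,dr<\infty$ for all $s\in[0,t]$. Then $\big(\varepsilon+(x_0)^p+p\int_0^t(x_r)^{p-1}\beta_r\,dr\big)^{1/p} \le (\varepsilon+(x_0)^p)^{1/p}+\int_0^t\beta_s\,ds$. -/

import Mathlib

open MeasureTheory Set
open scoped ENNReal NNReal

private lemma KL (f : ℝ → ℝ≥0∞) (hf : Measurable f) (t a c q : ℝ)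
    (ha : 0 < a) (hc : 0 < c) (hq0 : 0 < q) (hq1 : q < 1)
    (hfin : (∫⁻ r in Set.Ioc (0:ℝ) t, f r) ≠ ⊤) :
    ENNReal.ofReal ((a + c * (∫⁻ r in Set.Ioc (0:ℝ) t, f r).toReal) ^ q)
      ≤ ENNReal.ofReal (a ^ q)
        + ∫⁻ r in Set.Ioc (0:ℝ) t,
            ENNReal.ofReal (c * q * (a + c * (∫⁻ u in Set.Ioc (0:ℝ) r, f u).toReal) ^ (q - 1)) * f r := by
  classical
  set ν : Measure ℝ := (volume.restrict (Ioc 0 t)).withDensity f with hνdef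
  have hν_apply : ∀ s : Set ℝ, MeasurableSet s → ν s = ∫⁻ r in s ∩ Ioc 0 t, f r := by
    intro s hs
    rw [hνdef, withDensity_apply _ hs, Measure.restrict_restrict hs]
  have hν_univ : ν univ = ∫⁻ r in Ioc 0 t, f r := by
    rw [hν_apply univ MeasurableSet.univ, univ_inter]
  haveI hνfin : IsFiniteMeasure ν := ⟨by rw [hν_univ]; exact hfin.lt_top⟩
  set g : ℝ → ℝ := fun s => (ν (Iic s)).toReal with hgdef
  have hg_mono : Monotone g := fun s s' hss' =>
    ENNReal.toReal_mono (measure_ne_top ν _) (measure_mono (Iic_subset_Iic.2 hss'))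
  have hg_meas : Measurable g := hg_mono.measurable
  have hg_nonneg : ∀ s, 0 ≤ g s := fun s => ENNReal.toReal_nonneg
  set M : ℝ := (ν univ).toReal with hMdef
  have hM0 : 0 ≤ M := ENNReal.toReal_nonneg
  have hgM : ∀ s, g s ≤ M := fun s =>
    ENNReal.toReal_mono (measure_ne_top ν _) (measure_mono (subset_univ _))
  have hMofReal : ENNReal.ofReal M = ν univ := ENNReal.ofReal_toReal (measure_ne_top _ _)
  have hgr : ∀ r ∈ Ioc (0:ℝ) t, (∫⁻ u in Ioc (0:ℝ) r, f u) = ν (Iic r) := by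
    intro r hr
    rw [hν_apply _ measurableSet_Iic]
    have hset : Iic r ∩ Ioc (0:ℝ) t = Ioc (0:ℝ) r := by
      ext y
      simp only [mem_Ioc, mem_inter_iff, mem_Iic]
      constructor
      · rintro ⟨h1, h2, _⟩; exact ⟨h2, h1⟩
      · rintro ⟨h1, h2⟩; exact ⟨h2, h1, h2.trans hr.2⟩
    rw [hset]
  -- analytic gadgets
  have hpos : ∀ u : ℝ, 0 ≤ u → 0 < a + c * u := fun u hu => by nlinarith
  set W : ℝ → ℝ := fun u => c * q * (a + c * u) ^ (q - 1) with hWdef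
  set K : ℝ → ℝ := fun u => c * c * q * (1 - q) * (a + c * u) ^ (q - 2) with hKdef
  have hW_nonneg : ∀ u : ℝ, 0 ≤ u → 0 ≤ W u := fun u hu => by
    have := (hpos u hu).le
    have h1 : (0:ℝ) ≤ (a + c * u) ^ (q - 1) := Real.rpow_nonneg this _
    positivity
  have hK_nonneg : ∀ u : ℝ, 0 ≤ u → 0 ≤ K u := fun u hu => by
    have := (hpos u hu).le
    have h1 : (0:ℝ) ≤ (a + c * u) ^ (q - 2) := Real.rpow_nonneg this _
    have h2 : (0:ℝ) < 1 - q := by linarith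
    positivity
  have hW_anti : ∀ u v : ℝ, 0 ≤ u → u ≤ v → W v ≤ W u := by
    intro u v hu huv
    have h1 : (a + c * v) ^ (q - 1) ≤ (a + c * u) ^ (q - 1) :=
      Real.rpow_le_rpow_of_nonpos (hpos u hu) (by nlinarith) (by linarith)
    have h2 : (0:ℝ) ≤ c * q := by positivity
    simpa only [hWdef, mul_assoc] using mul_le_mul_of_nonneg_left h1 h2
  have hL : ∀ u : ℝ, HasDerivAt (fun v : ℝ => a + c * v) c u := by
    intro u
    simpa using ((hasDerivAt_id u).const_mul c).const_add a
  have hrpow : ∀ (e : ℝ) (u : ℝ), 0 ≤ u →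
      HasDerivAt (fun v : ℝ => (a + c * v) ^ e) (e * (a + c * u) ^ (e - 1) * c) u := by
    intro e u hu
    exact (Real.hasDerivAt_rpow_const (Or.inl (ne_of_gt (hpos u hu)))).comp u (hL u)
  have hWderiv : ∀ u : ℝ, 0 ≤ u → HasDerivAt (fun v : ℝ => -W v) (K u) u := by
    intro u hu
    have h1 := ((hrpow (q - 1) u hu).const_mul (c * q)).neg
    have he : q - 1 - 1 = q - 2 := by ring
    rw [he] at h1
    refine h1.congr_deriv ?_
    simp only [hKdef]
    ring
  have hPhideriv : ∀ u : ℝ, 0 ≤ u →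
      HasDerivAt (fun v : ℝ => (a + c * v) ^ q - W v * v) (K u * u) u := by
    intro u hu
    have h1 := hrpow q u hu
    have h2 := ((hrpow (q - 1) u hu).const_mul (c * q)).mul (hasDerivAt_id u)
    have he : q - 1 - 1 = q - 2 := by ring
    rw [he] at h2
    refine (h1.sub h2).congr_deriv ?_
    simp only [hKdef, hWdef, id_eq]
    ring
  have hK_cont : ContinuousOn K (Ici (0:ℝ)) := by
    apply ContinuousOn.mul continuousOn_const
    exact ((continuous_const.add (continuous_const.mul continuous_id)).continuousOn).rpow_const
      (fun x hx => Or.inl (ne_of_gt (hpos x hx)))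
  have hFTCB : ∀ b : ℝ, 0 ≤ b → b ≤ M → ∫ u in b..M, K u = W b - W M := by
    intro b hb hbM
    have hsub : uIcc b M ⊆ Ici (0:ℝ) := by
      rw [uIcc_of_le hbM]; exact (Icc_subset_Ici_iff hbM).2 hb
    have hint : IntervalIntegrable K volume b M := (hK_cont.mono hsub).intervalIntegrable
    have := intervalIntegral.integral_eq_sub_of_hasDerivAt
      (f := fun v => -W v) (f' := K)
      (fun u hu => hWderiv u (hsub hu)) hint
    rw [this]; ring
  have hFTCA : ∫ u in (0:ℝ)..M, K u * u = (a + c * M) ^ q - W M * M - a ^ q := by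
    have hsub : uIcc (0:ℝ) M ⊆ Ici (0:ℝ) := by
      rw [uIcc_of_le hM0]; exact (Icc_subset_Ici_iff hM0).2 le_rfl
    have hint : IntervalIntegrable (fun u => K u * u) volume 0 M :=
      ((hK_cont.mono hsub).mul continuousOn_id).intervalIntegrable
    have := intervalIntegral.integral_eq_sub_of_hasDerivAt
      (f := fun v => (a + c * v) ^ q - W v * v) (f' := fun u => K u * u)
      (fun u hu => hPhideriv u (hsub hu)) hint
    rw [this]
    simp only [hWdef]
    ring_nf
  -- the quantile estimate
  have hν_Iic_t : ν (Iic t) = ν univ := by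
    apply le_antisymm (measure_mono (subset_univ _))
    have hio : ν (Ioi t) = 0 := by
      rw [hν_apply _ measurableSet_Ioi]
      have : Ioi t ∩ Ioc (0:ℝ) t = ∅ := by
        ext y; simp only [mem_inter_iff, mem_Ioi, mem_Ioc, mem_empty_iff_false, iff_false]
        rintro ⟨h1, _, h3⟩; linarith
      rw [this]; simp
    calc ν univ = ν (Iic t ∪ Ioi t) := by rw [Iic_union_Ioi]
      _ ≤ ν (Iic t) + ν (Ioi t) := measure_union_le _ _
      _ = ν (Iic t) := by rw [hio, add_zero]
  have hstar : ∀ u : ℝ, u ∈ Ioc (0:ℝ) M → ENNReal.ofReal u ≤ ν {r | g r < u} := by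
    intro u hu
    set T : Set ℝ := {s : ℝ | ENNReal.ofReal u ≤ ν (Iic s)} with hTdef
    have hTne : t ∈ T := by
      show ENNReal.ofReal u ≤ ν (Iic t)
      rw [hν_Iic_t, ← hMofReal]
      exact ENNReal.ofReal_le_ofReal hu.2
    have hTbdd : BddBelow T := by
      refine ⟨0, fun s hs => ?_⟩
      by_contra hs0
      push_neg at hs0
      have hemp : Iic s ∩ Ioc (0:ℝ) t = ∅ := by
        ext y; simp only [mem_inter_iff, mem_Iic, mem_Ioc, mem_empty_iff_false, iff_false]
        rintro ⟨h1, h2, _⟩; linarith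
      have hz : ν (Iic s) = 0 := by rw [hν_apply _ measurableSet_Iic, hemp]; simp
      have hs' : ENNReal.ofReal u ≤ 0 := hz ▸ hs
      exact absurd (le_antisymm hs' zero_le) (ENNReal.ofReal_pos.2 hu.1).ne'
    set s0 := sInf T with hs0def
    have h1 : Iio s0 ⊆ {r | g r < u} := by
      intro r hr
      have hrT : r ∉ T := fun hrT => absurd (csInf_le hTbdd hrT) (not_le.2 hr)
      have hlt : ν (Iic r) < ENNReal.ofReal u := lt_of_not_ge hrT
      exact (ENNReal.lt_ofReal_iff_toReal_lt (measure_ne_top _ _)).1 hlt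
    have h2 : ENNReal.ofReal u ≤ ν (Iic s0) := by
      have key : ∀ n : ℕ, ENNReal.ofReal u ≤ ν (Iic (s0 + 1 / (n + 1))) := by
        intro n
        have hpos' : (0:ℝ) < 1 / (n + 1) := by positivity
        obtain ⟨s', hs'T, hs'lt⟩ := (csInf_lt_iff hTbdd ⟨t, hTne⟩).1
          (by linarith : sInf T < s0 + 1 / (n + 1))
        exact le_trans hs'T (measure_mono (Iic_subset_Iic.2 hs'lt.le))
      have hInter : ⋂ n : ℕ, Iic (s0 + 1 / (n + 1)) = Iic s0 := by
        ext y
        simp only [mem_iInter, mem_Iic]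
        constructor
        · intro hy
          by_contra hy'
          push_neg at hy'
          obtain ⟨n, hn⟩ := exists_nat_one_div_lt (by linarith : (0:ℝ) < y - s0)
          have := hy n
          linarith
        · intro hy n
          have : (0:ℝ) < 1 / (n + 1) := by positivity
          linarith
      have hanti : Antitone fun n : ℕ => Iic (s0 + 1 / ((n:ℝ) + 1)) := by
        intro m n hmn
        apply Iic_subset_Iic.2
        have hc : (m:ℝ) ≤ n := Nat.cast_le.2 hmn
        have : (1:ℝ) / (n + 1) ≤ 1 / (m + 1) :=
          one_div_le_one_div_of_le (by positivity) (by linarith)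
        linarith
      have htend := tendsto_measure_iInter_atTop (μ := ν)
        (fun n => measurableSet_Iic.nullMeasurableSet) hanti ⟨0, measure_ne_top _ _⟩
      rw [hInter] at htend
      exact ge_of_tendsto' htend key
    have hsing : ν {s0} = 0 := by
      rw [hν_apply _ (measurableSet_singleton s0)]
      apply setLIntegral_measure_zero
      exact measure_mono_null inter_subset_left Real.volume_singleton
    have h3 : ν (Iic s0) ≤ ν (Iio s0) := by
      calc ν (Iic s0) = ν (Iio s0 ∪ {s0}) := by rw [Iio_union_right]
        _ ≤ ν (Iio s0) + ν {s0} := measure_union_le _ _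
        _ = ν (Iio s0) := by rw [hsing, add_zero]
    exact h2.trans (h3.trans (measure_mono h1))
  -- measurability
  have hmLin : Measurable fun u : ℝ => a + c * u :=
    (measurable_const.mul measurable_id).const_add a
  have mK : Measurable K := measurable_const.mul (hmLin.pow measurable_const)
  have mW : Measurable W := measurable_const.mul (hmLin.pow measurable_const)
  have hA_nonneg : 0 ≤ (a + c * M) ^ q - W M * M - a ^ q := by
    rw [← hFTCA]
    exact intervalIntegral.integral_nonneg hM0 fun u hu => mul_nonneg (hK_nonneg u hu.1) hu.1
  -- rewrite the RHS integral through ν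
  have hRHS : (∫⁻ r in Set.Ioc (0:ℝ) t,
        ENNReal.ofReal (c * q * (a + c * (∫⁻ u in Set.Ioc (0:ℝ) r, f u).toReal) ^ (q - 1)) * f r)
      = ∫⁻ r, ENNReal.ofReal (W (g r)) ∂ν := by
    have mWg : Measurable fun r : ℝ => ENNReal.ofReal (W (g r)) :=
      (mW.comp hg_meas).ennreal_ofReal
    rw [hνdef, lintegral_withDensity_eq_lintegral_mul _ hf mWg]
    apply setLIntegral_congr_fun measurableSet_Ioc
    intro r hr
    simp only [hgr r hr]
    simp only [Pi.mul_apply]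
    rw [mul_comm]
  have hsplit : ∫⁻ r, ENNReal.ofReal (W (g r)) ∂ν
      = ENNReal.ofReal (W M) * ν univ + ∫⁻ r, ENNReal.ofReal (W (g r) - W M) ∂ν := by
    have hpt : ∀ r, ENNReal.ofReal (W (g r))
        = ENNReal.ofReal (W M) + ENNReal.ofReal (W (g r) - W M) := fun r => by
      rw [← ENNReal.ofReal_add (hW_nonneg M hM0)
        (sub_nonneg.2 (hW_anti (g r) M (hg_nonneg r) (hgM r)))]
      congr 1; ring
    simp_rw [hpt]
    rw [lintegral_add_left measurable_const, lintegral_const]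
  have hinner : ∀ r : ℝ, ENNReal.ofReal (W (g r) - W M)
      = ∫⁻ u in Ioc (g r) M, ENNReal.ofReal (K u) := by
    intro r
    rw [← hFTCB (g r) (hg_nonneg r) (hgM r), intervalIntegral.integral_of_le (hgM r)]
    apply ofReal_integral_eq_lintegral_ofReal
    · exact (hK_cont.mono (Icc_subset_Ici_iff (hgM r) |>.2 (hg_nonneg r))).integrableOn_Icc.mono_set
        Ioc_subset_Icc_self
    · exact (ae_restrict_iff' measurableSet_Ioc).2
        (ae_of_all _ fun u hu => hK_nonneg u (le_trans (hg_nonneg r) hu.1.le))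
  have hindic : ∀ r : ℝ, (∫⁻ u in Ioc (g r) M, ENNReal.ofReal (K u))
      = ∫⁻ u in Ioc (0:ℝ) M,
          ({p : ℝ × ℝ | g p.1 < p.2}.indicator (fun p => ENNReal.ofReal (K p.2)) (r, u)) := by
    intro r
    have hseteq : Ioi (g r) ∩ Ioc (0:ℝ) M = Ioc (g r) M := by
      ext y; simp only [mem_inter_iff, mem_Ioi, mem_Ioc]
      constructor
      · rintro ⟨h1, _, h3⟩; exact ⟨h1, h3⟩
      · rintro ⟨h1, h2⟩; exact ⟨h1, lt_of_le_of_lt (hg_nonneg r) h1, h2⟩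
    have hpt : ∀ u : ℝ, ({p : ℝ × ℝ | g p.1 < p.2}.indicator
          (fun p => ENNReal.ofReal (K p.2)) (r, u))
        = (Ioi (g r)).indicator (fun u => ENNReal.ofReal (K u)) u := by
      intro u; simp only [indicator_apply, mem_setOf_eq, mem_Ioi]
    simp_rw [hpt]
    rw [lintegral_indicator measurableSet_Ioi, Measure.restrict_restrict measurableSet_Ioi, hseteq]
  have hD : MeasurableSet {p : ℝ × ℝ | g p.1 < p.2} :=
    measurableSet_lt (hg_meas.comp measurable_fst) measurable_snd
  have hswap : ∫⁻ r, (∫⁻ u in Ioc (0:ℝ) M,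
        {p : ℝ × ℝ | g p.1 < p.2}.indicator (fun p => ENNReal.ofReal (K p.2)) (r, u)) ∂ν
      = ∫⁻ u in Ioc (0:ℝ) M,
          (∫⁻ r, {p : ℝ × ℝ | g p.1 < p.2}.indicator
            (fun p => ENNReal.ofReal (K p.2)) (r, u) ∂ν) := by
    apply lintegral_lintegral_swap
    exact (((mK.comp measurable_snd).ennreal_ofReal).indicator hD).aemeasurable
  have hfiber : ∀ u : ℝ, (∫⁻ r, {p : ℝ × ℝ | g p.1 < p.2}.indicator
        (fun p => ENNReal.ofReal (K p.2)) (r, u) ∂ν)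
      = ENNReal.ofReal (K u) * ν {r | g r < u} := by
    intro u
    have hpt : ∀ r : ℝ, {p : ℝ × ℝ | g p.1 < p.2}.indicator
          (fun p => ENNReal.ofReal (K p.2)) (r, u)
        = {r : ℝ | g r < u}.indicator (fun _ => ENNReal.ofReal (K u)) r := by
      intro r; simp only [indicator_apply, mem_setOf_eq]
    simp_rw [hpt]
    exact lintegral_indicator_const (hg_meas measurableSet_Iio) _
  have hmono_meas : Measurable fun u : ℝ => ENNReal.ofReal (K u) * ν {r | g r < u} := by
    apply (mK.ennreal_ofReal).mul
    have hm : Monotone fun u : ℝ => ν {r | g r < u} :=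
      fun u u' huu' => measure_mono fun r hr => lt_of_lt_of_le hr huu'
    exact hm.measurable
  have hlow : ∫⁻ u in Ioc (0:ℝ) M, ENNReal.ofReal (K u) * ENNReal.ofReal u
      ≤ ∫⁻ u in Ioc (0:ℝ) M, ENNReal.ofReal (K u) * ν {r | g r < u} :=
    setLIntegral_mono hmono_meas fun u hu => mul_le_mul_right (hstar u hu) _
  have hcompute : ∫⁻ u in Ioc (0:ℝ) M, ENNReal.ofReal (K u) * ENNReal.ofReal u
      = ENNReal.ofReal ((a + c * M) ^ q - W M * M - a ^ q) := by
    rw [← hFTCA, intervalIntegral.integral_of_le hM0]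
    rw [setLIntegral_congr_fun measurableSet_Ioc
      (fun u (hu : u ∈ Ioc (0:ℝ) M) =>
        (ENNReal.ofReal_mul (hK_nonneg u hu.1.le)).symm)]
    exact (ofReal_integral_eq_lintegral_ofReal
      (((hK_cont.mono (Icc_subset_Ici_iff hM0 |>.2 le_rfl)).mul
        continuousOn_id).integrableOn_Icc.mono_set Ioc_subset_Icc_self)
      ((ae_restrict_iff' measurableSet_Ioc).2
        (ae_of_all _ fun u hu => mul_nonneg (hK_nonneg u hu.1.le) hu.1.le))).symm
  have hMeq : (∫⁻ r in Set.Ioc (0:ℝ) t, f r).toReal = M := by rw [hMdef, hν_univ]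
  rw [hMeq, hRHS]
  calc ENNReal.ofReal ((a + c * M) ^ q)
      = ENNReal.ofReal (a ^ q) + (ENNReal.ofReal (W M * M)
          + ENNReal.ofReal ((a + c * M) ^ q - W M * M - a ^ q)) := by
        rw [← ENNReal.ofReal_add (mul_nonneg (hW_nonneg M hM0) hM0) hA_nonneg,
          ← ENNReal.ofReal_add (Real.rpow_nonneg ha.le q)
            (add_nonneg (mul_nonneg (hW_nonneg M hM0) hM0) hA_nonneg)]
        congr 1; ring
    _ ≤ ENNReal.ofReal (a ^ q) + (ENNReal.ofReal (W M) * ν univ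
          + ∫⁻ u in Ioc (0:ℝ) M, ENNReal.ofReal (K u) * ν {r | g r < u}) := by
        apply add_le_add_right
        apply add_le_add
        · exact le_of_eq (by rw [ENNReal.ofReal_mul (hW_nonneg M hM0), hMofReal])
        · rw [← hcompute]; exact hlow
    _ = ENNReal.ofReal (a ^ q) + ∫⁻ r, ENNReal.ofReal (W (g r)) ∂ν := by
        congr 1
        rw [hsplit]
        congr 1
        simp_rw [← hfiber]
        rw [← hswap]
        apply lintegral_congr
        intro r
        rw [← hindic r, hinner r]

/-- Regularized intermediate step in the proof of the Gronwall-Bellman-Opial inequality. -/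
theorem stmt15 (p ε t : ℝ) (hp : 1 < p) (hε : 0 < ε) (ht : 0 ≤ t)
    (x β : ℝ → ℝ≥0∞) (hx : Measurable x) (hβ : Measurable β)
    (h : ∀ s ∈ Set.Icc (0:ℝ) t,
      x s ^ p ≤ x 0 ^ p + ENNReal.ofReal p * ∫⁻ r in Set.Ioc (0:ℝ) s, x r ^ (p - 1) * β r ∧
        x 0 ^ p + ENNReal.ofReal p * ∫⁻ r in Set.Ioc (0:ℝ) s, x r ^ (p - 1) * β r < ⊤) :
    (ENNReal.ofReal ε + x 0 ^ p
        + ENNReal.ofReal p * ∫⁻ r in Set.Ioc (0:ℝ) t, x r ^ (p - 1) * β r) ^ (1 / p)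
      ≤ (ENNReal.ofReal ε + x 0 ^ p) ^ (1 / p) + ∫⁻ r in Set.Ioc (0:ℝ) t, β r := by
  have hp0 : (0:ℝ) < p := lt_trans one_pos hp
  set f : ℝ → ℝ≥0∞ := fun r => x r ^ (p - 1) * β r with hfdef
  have hfm : Measurable f := (hx.pow measurable_const).mul hβ
  obtain ⟨hle_t, hlt_t⟩ := h t ⟨ht, le_rfl⟩
  have hx0 : x 0 ^ p ≠ ⊤ := (lt_of_le_of_lt le_self_add hlt_t).ne
  have hGt : (∫⁻ r in Set.Ioc (0:ℝ) t, f r) ≠ ⊤ := by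
    intro hcon
    apply hlt_t.ne
    rw [hcon, ENNReal.mul_top (by simp only [ne_eq, ENNReal.ofReal_eq_zero, not_le]; linarith),
      add_top]
  set a : ℝ := ε + (x 0 ^ p).toReal with hadef
  have ha : 0 < a := add_pos_of_pos_of_nonneg hε ENNReal.toReal_nonneg
  have hax : ENNReal.ofReal ε + x 0 ^ p = ENNReal.ofReal a := by
    rw [hadef, ENNReal.ofReal_add hε.le ENNReal.toReal_nonneg, ENNReal.ofReal_toReal hx0]
  have hq0 : 0 < 1 / p := by positivity
  have hq1 : 1 / p < 1 := by rw [div_lt_one hp0]; exact hp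
  have key := KL f hfm t a p (1 / p) ha hp0 hq0 hq1 hGt
  have hgoalL : (ENNReal.ofReal ε + x 0 ^ p + ENNReal.ofReal p * ∫⁻ r in Set.Ioc (0:ℝ) t, f r)
      = ENNReal.ofReal (a + p * (∫⁻ r in Set.Ioc (0:ℝ) t, f r).toReal) := by
    rw [ENNReal.ofReal_add ha.le (mul_nonneg hp0.le ENNReal.toReal_nonneg),
      ENNReal.ofReal_mul hp0.le, ENNReal.ofReal_toReal hGt, hax]
  rw [hgoalL, hax, ENNReal.ofReal_rpow_of_pos
    (by positivity : 0 < a + p * (∫⁻ r in Set.Ioc (0:ℝ) t, f r).toReal),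
    ENNReal.ofReal_rpow_of_pos ha]
  refine le_trans key (add_le_add_right ?_ _)
  refine setLIntegral_mono hβ fun r hr => ?_
  have hr' : r ∈ Set.Icc (0:ℝ) t := ⟨hr.1.le, hr.2⟩
  obtain ⟨h1, -⟩ := h r hr'
  have hGr : (∫⁻ u in Set.Ioc (0:ℝ) r, f u) ≠ ⊤ :=
    (lt_of_le_of_lt (lintegral_mono_set (Ioc_subset_Ioc_right hr.2)) hGt.lt_top).ne
  set gr : ℝ := (∫⁻ u in Set.Ioc (0:ℝ) r, f u).toReal with hgrdef
  have hgr0 : 0 ≤ gr := ENNReal.toReal_nonneg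
  have hz : 0 < a + p * gr := by positivity
  have hxr : x r ^ p ≤ ENNReal.ofReal (a + p * gr) := by
    refine h1.trans ?_
    have heq : x 0 ^ p + ENNReal.ofReal p * (∫⁻ u in Set.Ioc (0:ℝ) r, f u)
        = ENNReal.ofReal ((x 0 ^ p).toReal + p * gr) := by
      rw [ENNReal.ofReal_add ENNReal.toReal_nonneg (mul_nonneg hp0.le hgr0),
        ENNReal.ofReal_toReal hx0, ENNReal.ofReal_mul hp0.le, hgrdef, ENNReal.ofReal_toReal hGr]
    rw [heq]
    exact ENNReal.ofReal_le_ofReal (by rw [hadef]; linarith)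
  have hxr1 : x r ≤ ENNReal.ofReal ((a + p * gr) ^ (1 / p)) := by
    have h2 := ENNReal.rpow_le_rpow hxr hq0.le
    rw [← ENNReal.rpow_mul, mul_one_div_cancel hp0.ne', ENNReal.rpow_one,
      ENNReal.ofReal_rpow_of_pos hz] at h2
    exact h2
  have hxr2 : x r ^ (p - 1) ≤ ENNReal.ofReal ((a + p * gr) ^ (1 / p * (p - 1))) := by
    have h2 := ENNReal.rpow_le_rpow hxr1 (by linarith : (0:ℝ) ≤ p - 1)
    rwa [ENNReal.ofReal_rpow_of_pos (Real.rpow_pos_of_pos hz _), ← Real.rpow_mul hz.le] at h2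
  have hfr : f r = x r ^ (p - 1) * β r := rfl
  calc ENNReal.ofReal (p * (1 / p) * (a + p * gr) ^ (1 / p - 1)) * f r
      = ENNReal.ofReal ((a + p * gr) ^ (1 / p - 1)) * (x r ^ (p - 1) * β r) := by
        rw [mul_one_div_cancel hp0.ne', one_mul, hfr]
    _ ≤ ENNReal.ofReal ((a + p * gr) ^ (1 / p - 1))
          * (ENNReal.ofReal ((a + p * gr) ^ (1 / p * (p - 1))) * β r) :=
        mul_le_mul_right (mul_le_mul_left hxr2 _) _
    _ = ENNReal.ofReal ((a + p * gr) ^ (1 / p - 1) * (a + p * gr) ^ (1 / p * (p - 1))) * β r := by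
        rw [← mul_assoc, ← ENNReal.ofReal_mul (Real.rpow_nonneg hz.le _)]
    _ = β r := by
        rw [← Real.rpow_add hz]
        have hexp : 1 / p - 1 + 1 / p * (p - 1) = 0 := by field_simp; ring
        rw [hexp, Real.rpow_zero, ENNReal.ofReal_one, one_mul]
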